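/- (a) Let (K, σ) be a 1-algebraically closed σ-field. Then every nonzero skew polynomial P(T) ∈ K[T;σ] splits completely: there exist a nonzero a ∈ K, nonzero elements a_1, …, a_n ∈ K, and m ≥ 0 such that P(T) = a·(T−a_n)⋯(T−a_2)(T−a_1)·T^m. (b) If moreover (K, σ) is ℵ_0-algebraically closed, then every nonzero P(T) ∈ K[T;σ] can be written as P(T) = a·(T−a_n)⋯(T−a_2)(T−a_1)·T^m where a ∈ K is nonzero, a_1, …, a_n ∈ K are distinct nonzero elements, and m ≥ 0. -/

import Mathlib

open Polynomial

variable {K : Type*} [Field K]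

/-- `skewN σ i a = σ^{i-1}(a)⋯σ(a)·a`, with `skewN σ 0 a = 1`. -/
def skewN (σ : K →+* K) : ℕ → K → K
  | 0, _ => 1
  | i + 1, a => σ (skewN σ i a) * a

/-- Right evaluation of a skew polynomial `P = Σ aᵢ Tⁱ` at `a`: `P(a) = Σ aᵢ Nᵢ(a)`. -/
noncomputable def skewEval (σ : K →+* K) (P : Polynomial K) (a : K) : K :=
  ∑ i ∈ P.support, P.coeff i * skewN σ i a

/-- Multiplication in the skew polynomial ring `K[T;σ]` (with `T·a = σ(a)·T`),
using `Polynomial K` as the carrier of coefficient sequences. -/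
noncomputable def skewMul (σ : K →+* K) (P Q : Polynomial K) : Polynomial K :=
  ∑ i ∈ P.support, ∑ j ∈ Q.support,
    Polynomial.C (P.coeff i * (⇑σ)^[i] (Q.coeff j)) * Polynomial.X ^ (i + j)

section Aux
variable (σ : K →+* K)

lemma skewN_succ' (i : ℕ) (a : K) :
    skewN σ (i + 1) a = (⇑σ)^[i] a * skewN σ i a := by
  induction i with
  | zero => simp [skewN]
  | succ n ih =>
      rw [show skewN σ (n + 2) a = σ (skewN σ (n + 1) a) * a from rfl]
      conv_lhs => rw [ih]
      rw [map_mul, ← Function.iterate_succ_apply' σ n a, mul_assoc,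
        show σ (skewN σ n a) * a = skewN σ (n + 1) a from rfl]

lemma skewN_zero_right (i : ℕ) (hi : i ≠ 0) : skewN σ i 0 = 0 := by
  cases i with
  | zero => exact absurd rfl hi
  | succ n => simp [skewN]

private lemma sum_support_eq {M : Type*} [AddCommMonoid M] (s t : Finset ℕ) (h : ℕ → M)
    (hs : ∀ i ∉ s, h i = 0) (ht : ∀ i ∉ t, h i = 0) :
    ∑ i ∈ s, h i = ∑ i ∈ t, h i := by
  rw [Finset.sum_subset (Finset.subset_union_left (s₂ := t)) (fun x _ hx => hs x hx),
    Finset.sum_subset (Finset.subset_union_right (s₁ := s)) (fun x _ hx => ht x hx)]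

lemma skewMul_coeff (P Q : Polynomial K) (n : ℕ) :
    (skewMul σ P Q).coeff n =
      ∑ k ∈ Finset.range (n + 1), P.coeff k * (⇑σ)^[k] (Q.coeff (n - k)) := by
  unfold skewMul
  rw [Polynomial.finset_sum_coeff]
  have h1 : ∀ i ∈ P.support,
      (∑ j ∈ Q.support, (C (P.coeff i * (⇑σ)^[i] (Q.coeff j)) * X ^ (i + j))).coeff n
      = ∑ j ∈ Q.support, if i + j = n then P.coeff i * (⇑σ)^[i] (Q.coeff j) else 0 := by
    intro i _
    rw [Polynomial.finset_sum_coeff]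
    refine Finset.sum_congr rfl fun j _ => ?_
    rw [Polynomial.coeff_C_mul, Polynomial.coeff_X_pow, mul_ite, mul_one, mul_zero]
    exact if_congr eq_comm rfl rfl
  rw [Finset.sum_congr rfl h1]
  have h2 : ∀ i, (∑ j ∈ Q.support, if i + j = n then P.coeff i * (⇑σ)^[i] (Q.coeff j) else 0)
      = ∑ j ∈ Finset.range (n + 1), if i + j = n then P.coeff i * (⇑σ)^[i] (Q.coeff j) else 0 := by
    intro i
    apply sum_support_eq
    · intro j hj
      rw [Polynomial.notMem_support_iff.mp hj]
      simp
    · intro j hj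
      rw [Finset.mem_range, not_lt] at hj
      have : i + j ≠ n := by omega
      simp [this]
  rw [Finset.sum_congr rfl fun i _ => h2 i]
  have h3 : ∀ g : ℕ → K, (∀ i, ∀ hh : P.coeff i = 0, g i = 0) → True := fun _ _ => trivial
  have h4 : (∑ i ∈ P.support, ∑ j ∈ Finset.range (n + 1),
        if i + j = n then P.coeff i * (⇑σ)^[i] (Q.coeff j) else 0)
      = ∑ i ∈ Finset.range (n + 1), ∑ j ∈ Finset.range (n + 1),
        if i + j = n then P.coeff i * (⇑σ)^[i] (Q.coeff j) else 0 := by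
    apply sum_support_eq
    · intro i hi
      rw [Polynomial.notMem_support_iff.mp hi]
      simp
    · intro i hi
      rw [Finset.mem_range, not_lt] at hi
      apply Finset.sum_eq_zero
      intro j _
      have : i + j ≠ n := by omega
      simp [this]
  rw [h4]
  refine Finset.sum_congr rfl fun i hi => ?_
  rw [Finset.mem_range] at hi
  have hcond : ∀ j, (i + j = n) = (j = n - i) := by
    intro j; apply propext; constructor <;> (intro; omega)
  rw [Finset.sum_congr rfl fun j _ => if_congr (by rw [hcond]) rfl rfl]
  rw [Finset.sum_ite_eq' (Finset.range (n + 1)) (n - i)]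
  simp [Nat.lt_succ_iff, Nat.sub_le]

lemma skewMul_C_left (a : K) (B : Polynomial K) : skewMul σ (C a) B = C a * B := by
  ext n
  rw [skewMul_coeff, Polynomial.coeff_C_mul, Finset.sum_eq_single 0]
  · simp
  · intro k _ hk0
    simp [Polynomial.coeff_C, hk0]
  · simp

lemma skewMul_zero_left (B : Polynomial K) : skewMul σ 0 B = 0 := by
  ext n; simp [skewMul_coeff]

lemma skewMul_add_left (A B C' : Polynomial K) :
    skewMul σ (A + B) C' = skewMul σ A C' + skewMul σ B C' := by
  ext n; simp [skewMul_coeff, add_mul, Finset.sum_add_distrib]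

lemma skewMul_sub_left (A B C' : Polynomial K) :
    skewMul σ (A - B) C' = skewMul σ A C' - skewMul σ B C' := by
  ext n; simp [skewMul_coeff, sub_mul, Finset.sum_sub_distrib]

lemma skewMul_add_right (A B C' : Polynomial K) :
    skewMul σ A (B + C') = skewMul σ A B + skewMul σ A C' := by
  ext n
  simp [skewMul_coeff, iterate_map_add, mul_add, Finset.sum_add_distrib]

lemma skewMul_sub_right (A B C' : Polynomial K) :
    skewMul σ A (B - C') = skewMul σ A B - skewMul σ A C' := by
  ext n
  simp [skewMul_coeff, iterate_map_sub, mul_sub, Finset.sum_sub_distrib]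

lemma skewMul_X_right (A : Polynomial K) : skewMul σ A X = A * X := by
  ext n
  rw [skewMul_coeff, Finset.sum_eq_single (n - 1)]
  · cases n with
    | zero => simp
    | succ m => simp [Polynomial.coeff_X, Polynomial.coeff_mul_X, iterate_map_one]
  · intro k hk hkn
    rw [Finset.mem_range] at hk
    have : (1 : ℕ) ≠ n - k := by omega
    simp [Polynomial.coeff_X, this, iterate_map_zero]
  · intro h
    exact absurd (Finset.mem_range.mpr (by omega)) h

lemma skewMul_X_pow_right (A : Polynomial K) (m : ℕ) : skewMul σ A (X ^ m) = A * X ^ m := by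
  ext n
  rw [skewMul_coeff, Polynomial.coeff_mul_X_pow', Finset.sum_eq_single (n - m)]
  · rcases le_or_gt m n with h | h
    · simp [Polynomial.coeff_X_pow, Nat.sub_sub_self h, h, iterate_map_one]
    · have h1 : n - (n - m) ≠ m := by omega
      simp [Polynomial.coeff_X_pow, h1, not_le.mpr h]
  · intro k hk hkn
    rw [Finset.mem_range] at hk
    have : n - k ≠ m := by omega
    simp [Polynomial.coeff_X_pow, this]
  · intro h
    exact absurd (Finset.mem_range.mpr (by omega)) h

lemma skewMul_one_right (A : Polynomial K) : skewMul σ A 1 = A := by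
  simpa using skewMul_X_pow_right σ A 0

lemma skewMul_one_left (B : Polynomial K) : skewMul σ 1 B = B := by
  simpa using skewMul_C_left σ 1 B

lemma skewMul_C_right_coeff (A : Polynomial K) (c : K) (n : ℕ) :
    (skewMul σ A (C c)).coeff n = A.coeff n * (⇑σ)^[n] c := by
  rw [skewMul_coeff, Finset.sum_eq_single n]
  · simp [Polynomial.coeff_C]
  · intro k hk hkn
    rw [Finset.mem_range] at hk
    have : n - k ≠ 0 := by omega
    simp [Polynomial.coeff_C, this]
  · intro h
    exact absurd (Finset.mem_range.mpr (by omega)) h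

lemma skewMul_smulC_left (a : K) (A B : Polynomial K) :
    skewMul σ (C a * A) B = C a * skewMul σ A B := by
  ext n
  simp [skewMul_coeff, Polynomial.coeff_C_mul, Finset.mul_sum, mul_assoc]

lemma coeff_mul_X_zero' (A : Polynomial K) : (A * X).coeff 0 = 0 := by
  simpa using Polynomial.coeff_mul_X_pow' A 1 0

lemma skewMul_mulX_left (A B : Polynomial K) :
    skewMul σ (A * X) B = skewMul σ A (B.map σ) * X := by
  ext n
  cases n with
  | zero =>
    rw [coeff_mul_X_zero', skewMul_coeff]
    simp [coeff_mul_X_zero']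
  | succ m =>
    rw [Polynomial.coeff_mul_X, skewMul_coeff, skewMul_coeff, Finset.sum_range_succ']
    rw [coeff_mul_X_zero', zero_mul, add_zero]
    refine Finset.sum_congr rfl fun k _ => ?_
    rw [Polynomial.coeff_mul_X, Polynomial.coeff_map,
      Function.iterate_succ_apply σ k, Nat.succ_sub_succ]

lemma skewMul_map (A B : Polynomial K) :
    (skewMul σ A B).map σ = skewMul σ (A.map σ) (B.map σ) := by
  ext n
  rw [Polynomial.coeff_map, skewMul_coeff, skewMul_coeff, map_sum]
  refine Finset.sum_congr rfl fun k _ => ?_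
  rw [map_mul, Polynomial.coeff_map, Polynomial.coeff_map,
    ← Function.iterate_succ_apply' σ k, Function.iterate_succ_apply σ k]

lemma skewMul_X_left (A : Polynomial K) : skewMul σ X A = A.map σ * X := by
  have h := skewMul_mulX_left σ 1 A
  rw [one_mul, skewMul_one_left] at h
  exact h

lemma skewMul_linear_left (t : K) (A : Polynomial K) :
    skewMul σ (X - C t) A = A.map σ * X - C t * A := by
  rw [skewMul_sub_left, skewMul_X_left, skewMul_C_left]

lemma skewMul_assoc_linear (t : K) (A B : Polynomial K) :
    skewMul σ (skewMul σ (X - C t) A) B = skewMul σ (X - C t) (skewMul σ A B) := by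
  rw [skewMul_linear_left σ t (skewMul σ A B), skewMul_linear_left, skewMul_sub_left,
    skewMul_mulX_left, skewMul_smulC_left, ← skewMul_map]

lemma skewMul_assoc_C (a : K) (A B : Polynomial K) :
    skewMul σ (skewMul σ (C a) A) B = skewMul σ (C a) (skewMul σ A B) := by
  rw [skewMul_C_left, skewMul_smulC_left, skewMul_C_left]

lemma foldr_skewMul (L : List K) (B : Polynomial K) :
    skewMul σ (L.foldr (fun t acc => skewMul σ (X - C t) acc) 1) B
      = L.foldr (fun t acc => skewMul σ (X - C t) acc) B := by
  induction L with
  | nil => simp [skewMul_one_left]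
  | cons t L ih => simp only [List.foldr_cons, skewMul_assoc_linear, ih]

lemma skewEval_eq_sum (P : Polynomial K) (c : K) :
    skewEval σ P c = P.sum fun i a => a * skewN σ i c := rfl

lemma skewEval_add (P Q : Polynomial K) (c : K) :
    skewEval σ (P + Q) c = skewEval σ P c + skewEval σ Q c := by
  rw [skewEval_eq_sum, skewEval_eq_sum, skewEval_eq_sum]
  exact Polynomial.sum_add_index P Q _ (fun i => zero_mul _) (fun a b₁ b₂ => add_mul _ _ _)

lemma skewEval_monomial (i : ℕ) (a c : K) :
    skewEval σ (monomial i a) c = a * skewN σ i c := by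
  rw [skewEval_eq_sum]
  exact Polynomial.sum_monomial_index a _ (zero_mul _)

lemma skewEval_C (a c : K) : skewEval σ (C a) c = a := by
  rw [← Polynomial.monomial_zero_left, skewEval_monomial]
  simp [skewN]

lemma skewEval_neg (P : Polynomial K) (c : K) : skewEval σ (-P) c = -skewEval σ P c := by
  unfold skewEval
  rw [Polynomial.support_neg, ← Finset.sum_neg_distrib]
  exact Finset.sum_congr rfl fun i _ => by rw [Polynomial.coeff_neg, neg_mul]

lemma skewEval_sub (P Q : Polynomial K) (c : K) :
    skewEval σ (P - Q) c = skewEval σ P c - skewEval σ Q c := by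
  rw [sub_eq_add_neg, skewEval_add, skewEval_neg, sub_eq_add_neg]

lemma skewEval_at_zero (P : Polynomial K) : skewEval σ P 0 = P.coeff 0 := by
  induction P using Polynomial.induction_on' with
  | add p q hp hq => rw [skewEval_add, hp, hq, Polynomial.coeff_add]
  | monomial n a =>
    rw [skewEval_monomial, Polynomial.coeff_monomial]
    cases n with
    | zero => simp [skewN]
    | succ m => simp [skewN]

lemma skewMul_monomial_linear (n : ℕ) (a c : K) :
    skewMul σ (monomial n a) (X - C c)
      = monomial (n + 1) a - monomial n (a * (⇑σ)^[n] c) := by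
  have h2 : skewMul σ (monomial n a) (C c) = monomial n (a * (⇑σ)^[n] c) := by
    ext k
    rw [skewMul_C_right_coeff, Polynomial.coeff_monomial, Polynomial.coeff_monomial]
    by_cases h : n = k
    · subst h; simp
    · simp [h]
  rw [skewMul_sub_right, skewMul_X_right, h2, Polynomial.monomial_mul_X]

lemma skewEval_skewMul_linear (A : Polynomial K) (c : K) :
    skewEval σ (skewMul σ A (X - C c)) c = 0 := by
  induction A using Polynomial.induction_on' with
  | add p q hp hq => rw [skewMul_add_left, skewEval_add, hp, hq, add_zero]
  | monomial n a =>
    rw [skewMul_monomial_linear, skewEval_sub, skewEval_monomial, skewEval_monomial,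
      skewN_succ']
    ring

lemma skew_div (c : K) : ∀ N (Q : Polynomial K), Q.natDegree ≤ N →
    ∃ Q1 : Polynomial K, Q = skewMul σ Q1 (X - C c) + C (skewEval σ Q c) := by
  intro N
  induction N with
  | zero =>
    intro Q hQ
    refine ⟨0, ?_⟩
    have hC := Polynomial.eq_C_of_natDegree_le_zero hQ
    rw [skewMul_zero_left, zero_add, hC, skewEval_C]
  | succ N ih =>
    intro Q hQ
    by_cases h : Q.natDegree ≤ N
    · exact ih Q h
    · have hdeg : Q.natDegree = N + 1 := le_antisymm hQ (not_le.mp h)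
      set b := Q.leadingCoeff with hb
      set D := skewMul σ (monomial N b) (X - C c) with hD
      have hDco : D = monomial (N + 1) b - monomial N (b * (⇑σ)^[N] c) :=
        skewMul_monomial_linear σ N b c
      have hQ' : (Q - D).natDegree ≤ N := by
        apply Polynomial.natDegree_le_iff_coeff_eq_zero.mpr
        intro m hm
        rw [Polynomial.coeff_sub, hDco, Polynomial.coeff_sub,
          Polynomial.coeff_monomial, Polynomial.coeff_monomial]
        rcases eq_or_lt_of_le (Nat.succ_le_of_lt hm) with he | hl
        · have hm' : m = N + 1 := he.symm
          subst hm'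
          have : Q.coeff (N + 1) = b := by
            rw [hb, Polynomial.leadingCoeff, hdeg]
          rw [this]
          simp [Nat.succ_ne_self]
        · have h1 : Q.coeff m = 0 :=
            Polynomial.coeff_eq_zero_of_natDegree_lt (by omega)
          have h2 : N + 1 ≠ m := by omega
          have h3 : N ≠ m := by omega
          simp [h1, h2, h3]
      obtain ⟨Q1, hQ1⟩ := ih (Q - D) hQ'
      refine ⟨Q1 + monomial N b, ?_⟩
      have heval : skewEval σ (Q - D) c = skewEval σ Q c := by
        rw [skewEval_sub, hD, skewEval_skewMul_linear, sub_zero]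
      calc Q = (Q - D) + D := by ring
      _ = (skewMul σ Q1 (X - C c) + C (skewEval σ (Q - D) c)) + D := by rw [← hQ1]
      _ = skewMul σ (Q1 + monomial N b) (X - C c) + C (skewEval σ Q c) := by
          rw [heval, skewMul_add_left, hD]; ring

lemma skewMul_linear_pack (A : Polynomial K) (hA : A ≠ 0) (c : K) :
    (skewMul σ A (X - C c)).natDegree = A.natDegree + 1 ∧
    (skewMul σ A (X - C c)).coeff 0 = -(A.coeff 0 * c) ∧
    (skewMul σ A (X - C c)).leadingCoeff = A.leadingCoeff := by
  have hco : ∀ k, (skewMul σ A (X - C c)).coeff k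
      = (A * X).coeff k - A.coeff k * (⇑σ)^[k] c := by
    intro k
    rw [skewMul_sub_right, skewMul_X_right, Polynomial.coeff_sub, skewMul_C_right_coeff]
  have htop : (skewMul σ A (X - C c)).coeff (A.natDegree + 1) = A.leadingCoeff := by
    rw [hco, Polynomial.coeff_mul_X,
      Polynomial.coeff_eq_zero_of_natDegree_lt (Nat.lt_succ_self _), zero_mul, sub_zero,
      Polynomial.leadingCoeff]
  have hlead : A.leadingCoeff ≠ 0 := Polynomial.leadingCoeff_ne_zero.mpr hA
  have hdeg : (skewMul σ A (X - C c)).natDegree = A.natDegree + 1 := by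
    apply le_antisymm
    · apply Polynomial.natDegree_le_iff_coeff_eq_zero.mpr
      intro m hm
      obtain ⟨m', rfl⟩ : ∃ m', m = m' + 1 := ⟨m - 1, by omega⟩
      rw [hco, Polynomial.coeff_mul_X,
        Polynomial.coeff_eq_zero_of_natDegree_lt (by omega),
        Polynomial.coeff_eq_zero_of_natDegree_lt (by omega)]
      simp
    · exact Polynomial.le_natDegree_of_ne_zero (by rw [htop]; exact hlead)
  refine ⟨hdeg, ?_, ?_⟩
  · rw [hco, coeff_mul_X_zero', zero_sub]
    simp
  · rw [Polynomial.leadingCoeff, hdeg, htop]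

lemma skew_factor {Q : Polynomial K} {c : K} (hroot : skewEval σ Q c = 0) (hQ : Q ≠ 0) :
    ∃ Q1 : Polynomial K, Q1 ≠ 0 ∧ Q = skewMul σ Q1 (X - C c) ∧
      Q1.natDegree + 1 = Q.natDegree ∧ Q.coeff 0 = -(Q1.coeff 0 * c) ∧
      Q1.leadingCoeff = Q.leadingCoeff := by
  obtain ⟨Q1, hQ1⟩ := skew_div σ c Q.natDegree Q le_rfl
  rw [hroot, map_zero, add_zero] at hQ1
  have hQ1ne : Q1 ≠ 0 := by
    rintro rfl
    rw [skewMul_zero_left] at hQ1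
    exact hQ hQ1
  obtain ⟨h1, h2, h3⟩ := skewMul_linear_pack σ Q1 hQ1ne c
  exact ⟨Q1, hQ1ne, hQ1, by rw [hQ1, h1], by rw [hQ1, h2], by rw [hQ1, h3]⟩

lemma root_ne_zero {Q : Polynomial K} (h0 : Q.coeff 0 ≠ 0) {c : K}
    (hc : skewEval σ Q c = 0) : c ≠ 0 := by
  rintro rfl
  rw [skewEval_at_zero] at hc
  exact h0 hc

lemma snoc_step {Q Q1 : Polynomial K} {c : K} (hfac : Q = skewMul σ Q1 (X - C c))
    {n : ℕ} {a : K} {r : Fin n → K}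
    (hQ1 : Q1 = skewMul σ (C a)
      ((List.ofFn r).foldr (fun t acc => skewMul σ (X - C t) acc) 1)) :
    Q = skewMul σ (C a) ((List.ofFn (Fin.snoc r c : Fin (n + 1) → K)).foldr
        (fun t acc => skewMul σ (X - C t) acc) 1) := by
  have hofn : List.ofFn (Fin.snoc r c : Fin (n + 1) → K) = List.ofFn r ++ [c] := by
    rw [List.ofFn_succ']
    simp
  have h1 : List.foldr (fun t acc => skewMul σ (X - C t) acc) 1 [c] = X - C c := by
    simp [skewMul_one_right]
  rw [hofn, List.foldr_append, h1, hfac, hQ1, skewMul_assoc_C, foldr_skewMul]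

lemma snoc_injective {n : ℕ} {r : Fin n → K} (hr : Function.Injective r) {c : K}
    (hc : ∀ i, r i ≠ c) : Function.Injective (Fin.snoc r c : Fin (n + 1) → K) := by
  intro i j hij
  induction i using Fin.lastCases with
  | last =>
    induction j using Fin.lastCases with
    | last => rfl
    | cast j' =>
      rw [Fin.snoc_last, Fin.snoc_castSucc] at hij
      exact absurd hij.symm (hc j')
  | cast i' =>
    induction j using Fin.lastCases with
    | last =>
      rw [Fin.snoc_last, Fin.snoc_castSucc] at hij
      exact absurd hij (hc i')
    | cast j' =>
      rw [Fin.snoc_castSucc, Fin.snoc_castSucc] at hij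
      exact congrArg Fin.castSucc (hr hij)

lemma deg_zero_case {Q : Polynomial K} (hQ : Q.natDegree = 0) :
    Q = skewMul σ (C (Q.coeff 0)) ((List.ofFn (Fin.elim0 : Fin 0 → K)).foldr
      (fun t acc => skewMul σ (X - C t) acc) 1) := by
  conv_lhs => rw [Polynomial.eq_C_of_natDegree_le_zero hQ.le]
  simp [skewMul_one_right]

lemma deg_one_factor {Q : Polynomial K} (h1 : Q.natDegree = 1) :
    Q = skewMul σ (C Q.leadingCoeff) (X - C (-(Q.coeff 0 / Q.leadingCoeff))) := by
  have hQ : Q ≠ 0 := fun h => by simp [h] at h1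
  have hl : Q.leadingCoeff ≠ 0 := Polynomial.leadingCoeff_ne_zero.mpr hQ
  have hc1 : Q.coeff 1 = Q.leadingCoeff := by rw [Polynomial.leadingCoeff, h1]
  have hx : Q.leadingCoeff * (Q.coeff 0 / Q.leadingCoeff) = Q.coeff 0 := by field_simp
  rw [skewMul_C_left]
  calc Q = C (Q.coeff 1) * X + C (Q.coeff 0) :=
        Polynomial.eq_X_add_C_of_natDegree_le_one h1.le
  _ = C Q.leadingCoeff * (X - C (-(Q.coeff 0 / Q.leadingCoeff))) := by
      rw [hc1, mul_sub, ← Polynomial.C_mul, mul_neg, hx, Polynomial.C_neg, sub_neg_eq_add]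

lemma deg_one_case {Q : Polynomial K} (h1 : Q.natDegree = 1) :
    Q = skewMul σ (C Q.leadingCoeff)
      ((List.ofFn (fun _ : Fin 1 => -(Q.coeff 0 / Q.leadingCoeff))).foldr
        (fun t acc => skewMul σ (X - C t) acc) 1) := by
  have hfold : (List.ofFn (fun _ : Fin 1 => -(Q.coeff 0 / Q.leadingCoeff))).foldr
      (fun t acc => skewMul σ (X - C t) acc) 1
      = X - C (-(Q.coeff 0 / Q.leadingCoeff)) := by
    simp [skewMul_one_right]
  rw [hfold]
  exact deg_one_factor σ h1

lemma glue (a : K) {n : ℕ} (r : Fin n → K) (m : ℕ) {Q : Polynomial K}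
    (hQ : Q = skewMul σ (C a)
      ((List.ofFn r).foldr (fun t acc => skewMul σ (X - C t) acc) 1)) :
    Q * X ^ m = skewMul σ (Polynomial.C a)
      ((List.ofFn r).foldr
        (fun t acc => skewMul σ (Polynomial.X - Polynomial.C t) acc) (Polynomial.X ^ m)) := by
  rw [← foldr_skewMul σ (List.ofFn r) (X ^ m), ← skewMul_assoc_C, ← hQ, skewMul_X_pow_right]

lemma split_trailing {P : Polynomial K} (hP : P ≠ 0) :
    ∃ (m : ℕ) (Q : Polynomial K), Q.coeff 0 ≠ 0 ∧ P = Q * X ^ m := by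
  obtain ⟨Q, hQ⟩ := (Polynomial.X_pow_dvd_iff (f := P) (n := P.natTrailingDegree)).mpr
    (fun d hd => Polynomial.coeff_eq_zero_of_lt_natTrailingDegree hd)
  have h0 : Q.coeff 0 = P.coeff P.natTrailingDegree := by
    have h := Polynomial.coeff_X_pow_mul Q P.natTrailingDegree 0
    rw [← hQ, zero_add] at h
    exact h.symm
  exact ⟨P.natTrailingDegree, Q,
    by rw [h0]; exact Polynomial.coeff_natTrailingDegree_ne_zero.mpr hP,
    by rw [mul_comm]; exact hQ⟩

end Aux

universe u

/-- `(K, σ)` is 1-algebraically closed: every nonconstant skew polynomial has a right root. -/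
def OneAlgClosed {K : Type*} [Field K] (σ : K →+* K) : Prop :=
  ∀ P : Polynomial K, 0 < P.natDegree → ∃ a : K, skewEval σ P a = 0

/-- `(K, σ)` is `c`-algebraically closed: every skew polynomial of degree `> 1` with nonzero
constant term has at least `c` distinct right roots. -/
def CAlgClosed {K : Type u} [Field K] (σ : K →+* K) (c : Cardinal.{u}) : Prop :=
  ∀ P : Polynomial K, 1 < P.natDegree → P.coeff 0 ≠ 0 →
    c ≤ Cardinal.mk {x : K // skewEval σ P x = 0}

/-- The product `a·(T−aₙ)⋯(T−a₂)(T−a₁)·Tᵐ` in `K[T;σ]`. -/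
noncomputable def skewLinearProd {K : Type*} [Field K] (σ : K →+* K) (a : K) {n : ℕ}
    (r : Fin n → K) (m : ℕ) : Polynomial K :=
  skewMul σ (Polynomial.C a)
    ((List.ofFn r).foldr
      (fun t acc => skewMul σ (Polynomial.X - Polynomial.C t) acc) (Polynomial.X ^ m))

section Main
variable (σ : K →+* K)

lemma partA_aux (h1 : OneAlgClosed σ) :
    ∀ N (Q : Polynomial K), Q.natDegree ≤ N → Q.coeff 0 ≠ 0 →
    ∃ (n : ℕ) (a : K) (r : Fin n → K), a ≠ 0 ∧ (∀ i, r i ≠ 0) ∧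
      Q = skewMul σ (C a) ((List.ofFn r).foldr (fun t acc => skewMul σ (X - C t) acc) 1) := by
  intro N
  induction N with
  | zero =>
    intro Q hQ h0
    exact ⟨0, Q.coeff 0, Fin.elim0, h0, fun i => i.elim0,
      deg_zero_case σ (Nat.le_zero.mp hQ)⟩
  | succ N ih =>
    intro Q hQ h0
    by_cases hd : Q.natDegree = 0
    · exact ⟨0, Q.coeff 0, Fin.elim0, h0, fun i => i.elim0, deg_zero_case σ hd⟩
    · obtain ⟨c, hc⟩ := h1 Q (Nat.pos_of_ne_zero hd)
      have hQne : Q ≠ 0 := fun h => h0 (by simp [h])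
      obtain ⟨Q1, hQ1ne, hfac, hdeg, hc0, _⟩ := skew_factor σ hc hQne
      have hc_ne : c ≠ 0 := root_ne_zero σ h0 hc
      have h10 : Q1.coeff 0 ≠ 0 := by
        intro h
        rw [h, zero_mul, neg_zero] at hc0
        exact h0 hc0
      obtain ⟨n, a, r, ha, hr, hQ1⟩ := ih Q1 (by omega) h10
      refine ⟨n + 1, a, Fin.snoc r c, ha, ?_, snoc_step σ hfac hQ1⟩
      intro i
      refine Fin.lastCases ?_ ?_ i
      · simpa using hc_ne
      · intro j
        simpa using hr j

lemma exists_root_avoid (h : CAlgClosed σ Cardinal.aleph0) {Q : Polynomial K}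
    (hd : 1 < Q.natDegree) (h0 : Q.coeff 0 ≠ 0) {s : Set K} (hs : s.Finite) :
    ∃ c : K, skewEval σ Q c = 0 ∧ c ∉ s := by
  have hinf : Set.Infinite {x : K | skewEval σ Q x = 0} := by
    rw [← Set.infinite_coe_iff]
    exact Cardinal.infinite_iff.mpr (h Q hd h0)
  obtain ⟨c, hc1, hc2⟩ := hinf.exists_notMem_finite hs
  exact ⟨c, hc1, hc2⟩

lemma partB_aux (h : CAlgClosed σ Cardinal.aleph0) :
    ∀ N (Q : Polynomial K) (S : Finset K), Q.natDegree ≤ N → Q.coeff 0 ≠ 0 →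
    ∃ (n : ℕ) (a : K) (r : Fin n → K), a ≠ 0 ∧ (∀ i, r i ≠ 0) ∧ Function.Injective r ∧
      (2 ≤ Q.natDegree → ∀ i, r i ∉ (S : Set K)) ∧
      Q = skewMul σ (C a) ((List.ofFn r).foldr (fun t acc => skewMul σ (X - C t) acc) 1) := by
  classical
  intro N
  induction N with
  | zero =>
    intro Q S hQ h0
    exact ⟨0, Q.coeff 0, Fin.elim0, h0, fun i => i.elim0, fun i => i.elim0,
      fun _ i => i.elim0, deg_zero_case σ (Nat.le_zero.mp hQ)⟩
  | succ N ih =>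
    intro Q S hQ h0
    have hQne : Q ≠ 0 := fun hz => h0 (by simp [hz])
    by_cases hd0 : Q.natDegree = 0
    · exact ⟨0, Q.coeff 0, Fin.elim0, h0, fun i => i.elim0, fun i => i.elim0,
        fun _ i => i.elim0, deg_zero_case σ hd0⟩
    by_cases hd1 : Q.natDegree = 1
    · have hl : Q.leadingCoeff ≠ 0 := Polynomial.leadingCoeff_ne_zero.mpr hQne
      refine ⟨1, Q.leadingCoeff, fun _ => -(Q.coeff 0 / Q.leadingCoeff), hl, ?_, ?_, ?_,
        deg_one_case σ hd1⟩
      · intro _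
        exact neg_ne_zero.mpr (div_ne_zero h0 hl)
      · intro i j _
        exact Subsingleton.elim i j
      · intro h2
        omega
    -- now 2 ≤ Q.natDegree
    have hd2 : 2 ≤ Q.natDegree := by omega
    have hl : Q.leadingCoeff ≠ 0 := Polynomial.leadingCoeff_ne_zero.mpr hQne
    by_cases hdeq2 : Q.natDegree = 2
    · -- degree exactly 2 : choose the root carefully
      set u := Q.leadingCoeff with hu
      set κ := Q.coeff 0 / u with hκ
      have hpne : (X ^ 2 - C κ : Polynomial K) ≠ 0 := fun hz => by
        have h2 := congrArg (fun p : Polynomial K => p.coeff 2) hz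
        simp [Polynomial.coeff_X_pow] at h2
      have hsq : {x : K | x * x = κ}.Finite := by
        apply (Polynomial.finite_setOf_isRoot hpne).subset
        intro x hx
        simp only [Set.mem_setOf_eq] at hx ⊢
        simp [Polynomial.IsRoot, sq, hx]
      have hbadfin : ((S : Set K) ∪ (S.image fun s => Q.coeff 0 / (u * s) : Finset K)
          ∪ {x : K | x * x = κ}).Finite :=
        ((S.finite_toSet.union (S.image _).finite_toSet).union hsq)
      obtain ⟨c1, hc1root, hc1bad⟩ := exists_root_avoid σ h (by omega) h0 hbadfin
      have hc1S : c1 ∉ (S : Set K) := fun hx => hc1bad (Or.inl (Or.inl hx))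
      have hc1ne : c1 ≠ 0 := root_ne_zero σ h0 hc1root
      obtain ⟨Q1, hQ1ne, hfac, hdeg, hc0, hlead⟩ := skew_factor σ hc1root hQne
      have hd1' : Q1.natDegree = 1 := by omega
      have h10 : Q1.coeff 0 ≠ 0 := by
        intro hz
        rw [hz, zero_mul, neg_zero] at hc0
        exact h0 hc0
      -- root of Q1
      set c2 := -(Q1.coeff 0 / Q1.leadingCoeff) with hc2def
      have hc2 : c2 = Q.coeff 0 / (u * c1) := by
        rw [hc2def, hlead, ← hu, hc0]
        field_simp
      have hc2ne : c2 ≠ 0 := by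
        rw [hc2]
        exact div_ne_zero h0 (mul_ne_zero hl hc1ne)
      have hc2S : c2 ∉ (S : Set K) := by
        intro hx
        apply hc1bad
        left; right
        simp only [Finset.coe_image, Set.mem_image, Finset.mem_coe]
        refine ⟨c2, hx, ?_⟩
        rw [hc2]
        field_simp
      have hc2c1 : c2 ≠ c1 := by
        intro hx
        apply hc1bad
        right
        simp only [Set.mem_setOf_eq]
        have h1 : c2 * (u * c1) = Q.coeff 0 := by
          rw [hc2]
          field_simp
        rw [hx] at h1
        rw [hκ]
        field_simp
        linear_combination h1
      have hQ1fac := deg_one_case σ hd1'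
      rw [← hc2def, hlead, ← hu] at hQ1fac
      refine ⟨2, u, Fin.snoc (fun _ : Fin 1 => c2) c1, hl, ?_, ?_, ?_,
        snoc_step σ hfac hQ1fac⟩
      · intro i
        refine Fin.lastCases ?_ ?_ i
        · simp only [Fin.snoc_last]; exact hc1ne
        · intro j; simpa using hc2ne
      · exact snoc_injective (fun i j _ => Subsingleton.elim i j) (fun i => by simpa using hc2c1)
      · intro _ i
        refine Fin.lastCases ?_ ?_ i
        · simp only [Fin.snoc_last]; exact hc1S
        · intro j; simpa using hc2S
    · -- degree ≥ 3
      obtain ⟨c1, hc1root, hc1S⟩ := exists_root_avoid σ h (by omega) h0 S.finite_toSet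
      have hc1ne : c1 ≠ 0 := root_ne_zero σ h0 hc1root
      obtain ⟨Q1, hQ1ne, hfac, hdeg, hc0, hlead⟩ := skew_factor σ hc1root hQne
      have h10 : Q1.coeff 0 ≠ 0 := by
        intro hz
        rw [hz, zero_mul, neg_zero] at hc0
        exact h0 hc0
      obtain ⟨n, a, r, ha, hr, hinj, havoid, hQ1⟩ := ih Q1 (insert c1 S) (by omega) h10
      have havoid' := havoid (by omega)
      have hrc1 : ∀ i, r i ≠ c1 := fun i hx =>
        havoid' i (by rw [hx]; simp)
      refine ⟨n + 1, a, Fin.snoc r c1, ha, ?_, snoc_injective hinj hrc1, ?_,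
        snoc_step σ hfac hQ1⟩
      · intro i
        refine Fin.lastCases ?_ ?_ i
        · simpa using hc1ne
        · intro j; simpa using hr j
      · intro _ i
        refine Fin.lastCases ?_ ?_ i
        · simpa using hc1S
        · intro j
          rw [Fin.snoc_castSucc]
          intro hx
          exact havoid' j (by simp [hx])

end Main

/-- (a) Over a 1-algebraically closed σ-field every nonzero skew polynomial splits completely
as `a·(T−aₙ)⋯(T−a₁)·Tᵐ` with `a, a₁, …, aₙ` nonzero; (b) over an ℵ₀-algebraically closed
σ-field the `aᵢ` can moreover be chosen distinct. -/
theorem stmt_15 {K : Type u} [Field K] (σ : K →+* K) :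
    (OneAlgClosed σ → ∀ P : Polynomial K, P ≠ 0 →
      ∃ (n m : ℕ) (a : K) (r : Fin n → K), a ≠ 0 ∧ (∀ i, r i ≠ 0) ∧
        P = skewLinearProd σ a r m) ∧
    (CAlgClosed σ Cardinal.aleph0 → ∀ P : Polynomial K, P ≠ 0 →
      ∃ (n m : ℕ) (a : K) (r : Fin n → K), a ≠ 0 ∧ (∀ i, r i ≠ 0) ∧
        Function.Injective r ∧ P = skewLinearProd σ a r m) := by
  constructor
  · intro h1 P hP
    obtain ⟨m, Q, hQ0, hPQ⟩ := split_trailing hP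
    obtain ⟨n, a, r, ha, hr, hfac⟩ := partA_aux σ h1 Q.natDegree Q le_rfl hQ0
    exact ⟨n, m, a, r, ha, hr, hPQ.trans (glue σ a r m hfac)⟩
  · intro h P hP
    obtain ⟨m, Q, hQ0, hPQ⟩ := split_trailing hP
    obtain ⟨n, a, r, ha, hr, hinj, _, hfac⟩ := partB_aux σ h Q.natDegree Q ∅ le_rfl hQ0
    exact ⟨n, m, a, r, ha, hr, hinj, hPQ.trans (glue σ a r m hfac)⟩
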